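/- arXiv:1802.08406 — 3 statements merged into one kernel-verified Lean document; each statement's English description precedes it below -/
import Mathlib

section
/- Suppose y = A x*, η > 0, ψ(v) = ‖y − A v‖², and the projection inequality ‖x_{t+1} − (x_t + η Aᵀ(y − A x_t))‖² ≤ ‖x* − (x_t + η Aᵀ(y − A x_t))‖² holds. Then ψ(x_{t+1}) ≤ (1/η)‖x* − x_t‖² − ψ(x_t) − ((1/η)‖x_{t+1} − x_t‖² − ‖A(x_{t+1} − x_t)‖²). -/
open scoped InnerProductSpace

theorem stmt_3 (m n : ℕ)
    (A : EuclideanSpace ℝ (Fin n) →L[ℝ] EuclideanSpace ℝ (Fin m))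
    (xstar xt xt1 : EuclideanSpace ℝ (Fin n))
    (y : EuclideanSpace ℝ (Fin m)) (hy : y = A xstar)
    (η : ℝ) (hη : 0 < η)
    (ψ : EuclideanSpace ℝ (Fin n) → ℝ)
    (hψ : ∀ v, ψ v = ‖y - A v‖ ^ 2)
    (hproj : ‖xt1 - (xt + η • (ContinuousLinearMap.adjoint A) (y - A xt))‖ ^ 2 ≤
      ‖xstar - (xt + η • (ContinuousLinearMap.adjoint A) (y - A xt))‖ ^ 2) :
    ψ xt1 ≤ (1 / η) * ‖xstar - xt‖ ^ 2 - ψ xt -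
      ((1 / η) * ‖xt1 - xt‖ ^ 2 - ‖A (xt1 - xt)‖ ^ 2) := by
  set g := (ContinuousLinearMap.adjoint A) (y - A xt) with hg
  have hre : ∀ v : EuclideanSpace ℝ (Fin n),
      ⟪v, η • g⟫_ℝ = η * ⟪A v, y - A xt⟫_ℝ := by
    intro v
    rw [real_inner_smul_right, hg, ContinuousLinearMap.adjoint_inner_right]
  have hAstar : A (xstar - xt) = y - A xt := by
    rw [map_sub, hy]
  have h1 : ‖xt1 - (xt + η • g)‖ ^ 2
      = ‖xt1 - xt‖ ^ 2 - 2 * (η * ⟪A (xt1 - xt), y - A xt⟫_ℝ) + ‖η • g‖ ^ 2 := by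
    rw [show xt1 - (xt + η • g) = (xt1 - xt) - η • g by abel, ← hre,
      norm_sub_sq_real]
  have h2 : ‖xstar - (xt + η • g)‖ ^ 2
      = ‖xstar - xt‖ ^ 2 - 2 * (η * ‖y - A xt‖ ^ 2) + ‖η • g‖ ^ 2 := by
    rw [show xstar - (xt + η • g) = (xstar - xt) - η • g by abel, norm_sub_sq_real, hre,
      hAstar, real_inner_self_eq_norm_sq]
  have h3 : ψ xt1 = ψ xt - 2 * ⟪A (xt1 - xt), y - A xt⟫_ℝ + ‖A (xt1 - xt)‖ ^ 2 := by
    rw [hψ, hψ, show y - A xt1 = (y - A xt) - A (xt1 - xt) by rw [map_sub]; abel,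
      norm_sub_sq_real, real_inner_comm]
  rw [h1, h2] at hproj
  rw [h3, hψ]
  set c := ⟪A (xt1 - xt), y - A xt⟫_ℝ with hc
  set a := ‖xt1 - xt‖ ^ 2
  set b := ‖xstar - xt‖ ^ 2
  set d := ‖y - A xt‖ ^ 2
  have key : a - 2 * (η * c) ≤ b - 2 * (η * d) := by linarith
  have hηne : η ≠ 0 := ne_of_gt hη
  have h4 : (1 / η) * (a - 2 * (η * c)) ≤ (1 / η) * (b - 2 * (η * d)) :=
    mul_le_mul_of_nonneg_left key (le_of_lt (one_div_pos.mpr hη))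
  have h5 : (1 / η) * (a - 2 * (η * c)) = (1 / η) * a - 2 * c := by field_simp
  have h6 : (1 / η) * (b - 2 * (η * d)) = (1 / η) * b - 2 * d := by field_simp
  linarith
end

section
/- Let S ⊆ R^n, A an m×n matrix satisfying S-REC(S, γ, 0) (i.e., ‖A(x₁−x₂)‖² ≥ γ‖x₁−x₂‖² for all x₁,x₂ ∈ S) and ‖Av‖ ≤ ρ‖v‖ for all v with ρ² ≤ γ. Fix x* ∈ S, y = A x*, and step size η with 1/(2γ) < η < 1/γ. If the sequence (x_t) in S satisfies the projection property ‖x_{t+1} − w_t‖ ≤ ‖x* − w_t‖ where w_t = x_t + η Aᵀ(y − A x_t), then ψ(x_{t+1}) ≤ α ψ(x_t) with α = 1/(ηγ) − 1 ∈ (0,1), where ψ(v) = ‖y − A v‖². -/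
lemma stmt_8_arith (γ η a b c p q : ℝ) (hγ : 0 < γ) (hη : 0 < η)
    (hηγ1 : η * γ < 1)
    (h1 : p - 2 * (η * c) ≤ q - 2 * (η * b))
    (h2 : b ≥ γ * q) (h3 : a ≤ γ * p) (ha : 0 ≤ a) :
    η * γ * (b - 2 * c + a) ≤ (1 - η * γ) * b := by
  nlinarith [mul_le_mul_of_nonneg_left h1 hγ.le, mul_le_mul_of_nonneg_left h2 hη.le]

theorem stmt_8 (m n : ℕ)
    (A : EuclideanSpace ℝ (Fin n) →L[ℝ] EuclideanSpace ℝ (Fin m))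
    (S : Set (EuclideanSpace ℝ (Fin n))) (γ ρ η : ℝ)
    (hγ : 0 < γ) (hρ : 0 ≤ ρ)
    (hSREC : ∀ x1 ∈ S, ∀ x2 ∈ S, ‖A (x1 - x2)‖ ^ 2 ≥ γ * ‖x1 - x2‖ ^ 2)
    (hAρ : ∀ v : EuclideanSpace ℝ (Fin n), ‖A v‖ ≤ ρ * ‖v‖)
    (hργ : ρ ^ 2 ≤ γ)
    (xstar : EuclideanSpace ℝ (Fin n)) (hxs : xstar ∈ S)
    (y : EuclideanSpace ℝ (Fin m)) (hy : y = A xstar)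
    (hη1 : 1 / (2 * γ) < η) (hη2 : η < 1 / γ)
    (x : ℕ → EuclideanSpace ℝ (Fin n)) (hxS : ∀ t, x t ∈ S)
    (hproj : ∀ t,
      ‖x (t + 1) - (x t + η • (ContinuousLinearMap.adjoint A) (y - A (x t)))‖ ≤
      ‖xstar - (x t + η • (ContinuousLinearMap.adjoint A) (y - A (x t)))‖)
    (ψ : EuclideanSpace ℝ (Fin n) → ℝ)
    (hψ : ∀ v, ψ v = ‖y - A v‖ ^ 2) :
    (0 < 1 / (η * γ) - 1 ∧ 1 / (η * γ) - 1 < 1) ∧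
      ∀ t, ψ (x (t + 1)) ≤ (1 / (η * γ) - 1) * ψ (x t) := by
  have hη0 : 0 < η := lt_trans (by positivity) hη1
  have hηγ : 0 < η * γ := mul_pos hη0 hγ
  have hηγ1 : η * γ < 1 := (lt_div_iff₀ hγ).mp hη2
  have hηγ2 : 1 < 2 * (η * γ) := by
    have := (div_lt_iff₀ (by positivity : (0:ℝ) < 2 * γ)).mp hη1
    nlinarith
  refine ⟨⟨by
    have := one_lt_one_div hηγ hηγ1
    linarith, by
    have : 1 / (η * γ) < 2 := (div_lt_iff₀ hηγ).mpr (by linarith)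
    linarith⟩, ?_⟩
  intro t
  obtain ⟨u, hu⟩ : ∃ u : EuclideanSpace ℝ (Fin n), u = x (t + 1) - x t := ⟨_, rfl⟩
  obtain ⟨v, hv⟩ : ∃ v : EuclideanSpace ℝ (Fin n), v = xstar - x t := ⟨_, rfl⟩
  have hAv : y - A (x t) = A v := by rw [hy, hv, map_sub]
  -- projection inequality squared
  have hp := hproj t
  have hpsq : ‖x (t + 1) - (x t + η • (ContinuousLinearMap.adjoint A) (y - A (x t)))‖ ^ 2 ≤
      ‖xstar - (x t + η • (ContinuousLinearMap.adjoint A) (y - A (x t)))‖ ^ 2 := by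
    exact pow_le_pow_left₀ (norm_nonneg _) hp 2
  rw [hAv] at hpsq
  have e1 : x (t + 1) - (x t + η • (ContinuousLinearMap.adjoint A) (A v))
      = u - η • (ContinuousLinearMap.adjoint A) (A v) := by rw [hu]; abel
  have e2 : xstar - (x t + η • (ContinuousLinearMap.adjoint A) (A v))
      = v - η • (ContinuousLinearMap.adjoint A) (A v) := by rw [hv]; abel
  rw [e1, e2, @norm_sub_sq_real, @norm_sub_sq_real] at hpsq
  have iu : inner ℝ u (η • (ContinuousLinearMap.adjoint A) (A v)) =
      η * (inner ℝ (A u) (A v) : ℝ) := by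
    rw [real_inner_smul_right, ContinuousLinearMap.adjoint_inner_right]
  have iv : inner ℝ v (η • (ContinuousLinearMap.adjoint A) (A v)) =
      η * ‖A v‖ ^ 2 := by
    rw [real_inner_smul_right, ContinuousLinearMap.adjoint_inner_right,
      real_inner_self_eq_norm_sq]
  rw [iu, iv] at hpsq
  have h1 : ‖u‖ ^ 2 - 2 * (η * (inner ℝ (A u) (A v) : ℝ)) ≤ ‖v‖ ^ 2 - 2 * (η * ‖A v‖ ^ 2) := by
    linarith
  -- S-REC on v
  have h2 : ‖A v‖ ^ 2 ≥ γ * ‖v‖ ^ 2 := hv ▸ hSREC xstar hxs (x t) (hxS t)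
  -- spectral bound on u
  have h3 : ‖A u‖ ^ 2 ≤ γ * ‖u‖ ^ 2 := by
    have := hAρ u
    nlinarith [norm_nonneg (A u), norm_nonneg u, sq_nonneg ‖u‖]
  -- ψ expansions
  have hψ1 : ψ (x (t + 1)) = ‖A v‖ ^ 2 - 2 * (inner ℝ (A u) (A v) : ℝ) + ‖A u‖ ^ 2 := by
    rw [hψ]
    have : y - A (x (t + 1)) = A v - A u := by
      rw [hy, hu, hv, map_sub, map_sub]; abel
    rw [this, @norm_sub_sq_real, real_inner_comm]
  have hψ0 : ψ (x t) = ‖A v‖ ^ 2 := by rw [hψ, hAv]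
  have key : η * γ * ψ (x (t + 1)) ≤ (1 - η * γ) * ψ (x t) := by
    rw [hψ1, hψ0]
    exact stmt_8_arith γ η (‖A u‖ ^ 2) (‖A v‖ ^ 2) (inner ℝ (A u) (A v)) (‖u‖ ^ 2) (‖v‖ ^ 2)
      hγ hη0 hηγ1 h1 h2 h3 (sq_nonneg _)
  have step : ψ (x (t + 1)) ≤ ((1 - η * γ) * ψ (x t)) / (η * γ) := by
    rw [le_div_iff₀ hηγ]; linarith
  have : ((1 - η * γ) * ψ (x t)) / (η * γ) = (1 / (η * γ) - 1) * ψ (x t) := by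
    field_simp
  linarith [this ▸ step]
end

section
/- Under the hypotheses of the contraction lemma (S-REC(S, γ, 0), ‖Av‖ ≤ ρ‖v‖ with ρ² ≤ γ, 1/(2γ) < η < 1/γ, projection property with respect to x* ∈ S, all iterates in S), the sequence (x_t) converges to x*. -/
set_option maxHeartbeats 1000000

theorem stmt_10 (m n : ℕ)
    (A : EuclideanSpace ℝ (Fin n) →L[ℝ] EuclideanSpace ℝ (Fin m))
    (S : Set (EuclideanSpace ℝ (Fin n))) (γ ρ η : ℝ)
    (hγ : 0 < γ) (hρ : 0 ≤ ρ)
    (hSREC : ∀ x1 ∈ S, ∀ x2 ∈ S, ‖A (x1 - x2)‖ ^ 2 ≥ γ * ‖x1 - x2‖ ^ 2)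
    (hAρ : ∀ v : EuclideanSpace ℝ (Fin n), ‖A v‖ ≤ ρ * ‖v‖)
    (hργ : ρ ^ 2 ≤ γ)
    (xstar : EuclideanSpace ℝ (Fin n)) (hxs : xstar ∈ S)
    (y : EuclideanSpace ℝ (Fin m)) (hy : y = A xstar)
    (hη1 : 1 / (2 * γ) < η) (hη2 : η < 1 / γ)
    (x : ℕ → EuclideanSpace ℝ (Fin n)) (hxS : ∀ t, x t ∈ S)
    (hproj : ∀ t,
      ‖x (t + 1) - (x t + η • (ContinuousLinearMap.adjoint A) (y - A (x t)))‖ ≤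
      ‖xstar - (x t + η • (ContinuousLinearMap.adjoint A) (y - A (x t)))‖) :
    Filter.Tendsto x Filter.atTop (nhds xstar) := by
  have hη0 : 0 < η := lt_trans (by positivity) hη1
  have hηγ1 : η * γ < 1 := by
    have := (lt_div_iff₀ hγ).mp hη2
    linarith
  have hηγ2 : 1 / 2 < η * γ := by
    rw [div_lt_iff₀ (by positivity)] at hη1
    nlinarith
  set c : ℝ := 2 * (1 - η * γ) with hc
  have hc0 : 0 ≤ c := by nlinarith
  have hc1 : c < 1 := by nlinarith
  have key : ∀ t, ‖x (t + 1) - xstar‖ ≤ c * ‖x t - xstar‖ := by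
    intro t
    set w := x (t + 1) - xstar with hw
    set u := x t - xstar with hu
    set v := u - η • (ContinuousLinearMap.adjoint A) (A u) with hv
    have hveq : x t + η • (ContinuousLinearMap.adjoint A) (y - A (x t)) - xstar = v := by
      rw [hv, hu, hy, ← map_sub]
      have e : xstar - x t = -(x t - xstar) := by abel
      rw [e, map_neg, map_neg, smul_neg]
      abel
    have h1 : ‖w - v‖ ≤ ‖v‖ := by
      have := hproj t
      have e1 : x (t + 1) - (x t + η • (ContinuousLinearMap.adjoint A) (y - A (x t))) = w - v := by
        rw [← hveq, hw]; abel
      have e2 : xstar - (x t + η • (ContinuousLinearMap.adjoint A) (y - A (x t))) = -v := by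
        rw [← hveq]; abel
      rw [e1, e2, norm_neg] at this
      exact this
    have h2 : ‖w - v‖ ^ 2 ≤ ‖v‖ ^ 2 := by
      exact pow_le_pow_left₀ (norm_nonneg _) h1 2
    rw [norm_sub_sq_real] at h2
    have h3 : ‖w‖ ^ 2 ≤ 2 * inner ℝ w v := by linarith
    have hinner : (inner ℝ w v : ℝ) = inner ℝ w u - η * inner ℝ (A w) (A u) := by
      rw [hv, inner_sub_right, real_inner_smul_right,
        ContinuousLinearMap.adjoint_inner_right]
    -- S-REC bounds
    have hAw : γ * ‖w‖ ^ 2 ≤ ‖A w‖ ^ 2 := by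
      have := hSREC (x (t + 1)) (hxS _) xstar hxs
      rwa [← hw] at this
    have hAu : γ * ‖u‖ ^ 2 ≤ ‖A u‖ ^ 2 := by
      have := hSREC (x t) (hxS _) xstar hxs
      rwa [← hu] at this
    have hAwu : ‖A (w - u)‖ ^ 2 ≤ γ * ‖w - u‖ ^ 2 := by
      have h := hAρ (w - u)
      have : ‖A (w - u)‖ ^ 2 ≤ (ρ * ‖w - u‖) ^ 2 :=
        pow_le_pow_left₀ (norm_nonneg _) h 2
      nlinarith [sq_nonneg ‖w - u‖]
    have hexp1 : ‖A (w - u)‖ ^ 2 = ‖A w‖ ^ 2 - 2 * inner ℝ (A w) (A u) + ‖A u‖ ^ 2 := by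
      rw [map_sub, norm_sub_sq_real]
    have hexp2 : ‖w - u‖ ^ 2 = ‖w‖ ^ 2 - 2 * inner ℝ w u + ‖u‖ ^ 2 := norm_sub_sq_real w u
    -- combine
    have h4 : ‖w‖ ^ 2 ≤ c * inner ℝ w u := by
      rw [hinner] at h3
      nlinarith [mul_le_mul_of_nonneg_left hAw (le_of_lt hη0),
        mul_le_mul_of_nonneg_left hAu (le_of_lt hη0),
        mul_le_mul_of_nonneg_left hAwu (le_of_lt hη0)]
    have h5 : (inner ℝ w u : ℝ) ≤ ‖w‖ * ‖u‖ := real_inner_le_norm w u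
    have h6 : ‖w‖ ^ 2 ≤ c * (‖w‖ * ‖u‖) := by
      calc ‖w‖ ^ 2 ≤ c * inner ℝ w u := h4
        _ ≤ c * (‖w‖ * ‖u‖) := by
          exact mul_le_mul_of_nonneg_left h5 hc0
    rcases eq_or_lt_of_le (norm_nonneg w) with hw0 | hw0
    · rw [← hw0]; positivity
    · nlinarith
  have geom : ∀ t, ‖x t - xstar‖ ≤ c ^ t * ‖x 0 - xstar‖ := by
    intro t
    induction t with
    | zero => simp
    | succ t ih =>
      calc ‖x (t + 1) - xstar‖ ≤ c * ‖x t - xstar‖ := key t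
        _ ≤ c * (c ^ t * ‖x 0 - xstar‖) := mul_le_mul_of_nonneg_left ih hc0
        _ = c ^ (t + 1) * ‖x 0 - xstar‖ := by ring
  rw [tendsto_iff_norm_sub_tendsto_zero]
  have hlim : Filter.Tendsto (fun t => c ^ t * ‖x 0 - xstar‖) Filter.atTop (nhds 0) := by
    have := (tendsto_pow_atTop_nhds_zero_of_lt_one hc0 hc1).mul_const ‖x 0 - xstar‖
    simpa using this
  exact squeeze_zero (fun t => norm_nonneg _) geom hlim
end
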